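/- Let A be a type with two binary operations | and ∗. If axiom C7 ((x∗y) | y = x for all x, y) and axiom C4 ((a|b)∗(c|d) = (a∗c)|(b∗d) for all a,b,c,d) hold, then axiom C3 holds: (a|b)|(c|d) = (a|c)|(b|d) for all a,b,c,d. (Lemma 2.1.3(f).) -/
import Mathlib

/-- Lemma 2.1.3(f): axioms C7 and C4 imply axiom C3. -/
theorem conway_C7_C4_imp_C3 {A : Type*} (bar ast : A → A → A)
    (hC7 : ∀ x y : A, bar (ast x y) y = x)
    (hC4 : ∀ a b c d : A, ast (bar a b) (bar c d) = bar (ast a c) (ast b d)) :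
    ∀ a b c d : A, bar (bar a b) (bar c d) = bar (bar a c) (bar b d) := by
  have hC6 : ∀ a b : A, ast (bar a b) b = a := by
    intro a b
    have h := hC4 a b (ast b b) b
    rw [hC7 b b] at h
    rw [h, hC7]
  intro a b c d
  have key : ast (bar (bar a c) (bar b d)) (bar c d) = bar a b := by
    rw [hC4, hC6, hC6]
  calc bar (bar a b) (bar c d)
      = bar (ast (bar (bar a c) (bar b d)) (bar c d)) (bar c d) := by rw [key]
    _ = bar (bar a c) (bar b d) := hC7 _ _
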